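/- Let φ be a closed FOSL(−∗) formula whose quantified variables are among {x₁,…,x_q}, with distinct quantifications using distinct variables, and let X = {x₁,…,x_{2q}}. Then φ is valid (satisfied by all memory states) if and only if T_VAL(φ) := ((⋀_{i∈[1,2q]} ¬alloc(x_i)) ∧ Safe(X)) ⇒ T(φ, X) is valid (in SL(∗,−∗) extended with n(x)=n(y), n(x)↪n(y), alloc⁻¹(x)). -/

import Mathlib

/-! Equivalidity of a closed `FOSL(−∗)` formula `φ` and its translation
`T_VAL(φ)`. -/

namespace SL10

abbrev Var := ℕ
abbrev Loc := ℕ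

/-- A heap: a partial function on locations with finite domain. -/
structure Heap where
  f : Loc → Option Loc
  fin : {l | f l ≠ none}.Finite

/-- Domain of a heap. -/
def Heap.dom (h : Heap) : Set Loc := {l | h.f l ≠ none}

/-- Disjointness of heaps. -/
def Heap.Disj (h₁ h₂ : Heap) : Prop := ∀ l, h₁.f l = none ∨ h₂.f l = none

/-- Union of heaps (left-biased; used on disjoint heaps). -/
def Heap.union (h₁ h₂ : Heap) : Heap where
  f := fun l => (h₁.f l).or (h₂.f l)
  fin := by
    apply Set.Finite.subset (h₁.fin.union h₂.fin)
    intro l hl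
    simp only [Set.mem_setOf_eq] at hl
    by_cases h1 : h₁.f l = none
    · right
      simp only [Set.mem_setOf_eq]
      intro h2
      exact hl (by simp [h1, h2])
    · left; exact h1

/-- Formulas of first-order separation logic `FOSL(−∗)`. -/
inductive FForm : Type
  | eq (x y : Var)
  | pto (x y : Var)
  | not (φ : FForm)
  | or (φ ψ : FForm)
  | wand (φ ψ : FForm)
  | all (x : Var) (φ : FForm)

/-- The free variables of an `FOSL(−∗)` formula. -/
def FForm.fv : FForm → Finset Var
  | .eq x y => {x, y}
  | .pto x y => {x, y}
  | .not φ => φ.fv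
  | .or φ ψ => φ.fv ∪ ψ.fv
  | .wand φ ψ => φ.fv ∪ ψ.fv
  | .all x φ => φ.fv.erase x

/-- The list of variables bound by the universal quantifiers of a formula. -/
def FForm.binderList : FForm → List Var
  | .eq _ _ => []
  | .pto _ _ => []
  | .not φ => φ.binderList
  | .or φ ψ => φ.binderList ++ ψ.binderList
  | .wand φ ψ => φ.binderList ++ ψ.binderList
  | .all x φ => x :: φ.binderList

/-- Formulas of propositional separation logic `SL(∗, −∗)` extended with the
atomic predicates `n(x) = n(y)`, `n(x) ↪ n(y)` and `alloc⁻¹(x)`. -/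
inductive TForm : Type
  | eq (x y : Var)
  | pto (x y : Var)
  | emp
  | top
  | nEq (x y : Var)       -- `n(x) = n(y)`
  | nPto (x y : Var)      -- `n(x) ↪ n(y)`
  | allocInv (x : Var)    -- `alloc⁻¹(x)`
  | not (φ : TForm)
  | and (φ ψ : TForm)
  | sep (φ ψ : TForm)
  | wand (φ ψ : TForm)

/-- Simultaneous renaming of the variables of a target formula. -/
def TForm.rename (ρ : Var → Var) : TForm → TForm
  | .eq x y => .eq (ρ x) (ρ y)
  | .pto x y => .pto (ρ x) (ρ y)
  | .emp => .emp
  | .top => .top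
  | .nEq x y => .nEq (ρ x) (ρ y)
  | .nPto x y => .nPto (ρ x) (ρ y)
  | .allocInv x => .allocInv (ρ x)
  | .not φ => .not (φ.rename ρ)
  | .and φ ψ => .and (φ.rename ρ) (ψ.rename ρ)
  | .sep φ ψ => .sep (φ.rename ρ) (ψ.rename ρ)
  | .wand φ ψ => .wand (φ.rename ρ) (ψ.rename ρ)

/-- Falsum `⊥`. -/
def tBot : TForm := .not .top

/-- Disjunction on target formulas. -/
def tOr (φ ψ : TForm) : TForm := .not (.and (.not φ) (.not ψ))

/-- Implication on target formulas. -/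
def tImp (φ ψ : TForm) : TForm := tOr (.not φ) ψ

/-- `alloc(x) := (x ↪ x) −∗ ⊥`. -/
def tAlloc (x : Var) : TForm := .wand (.pto x x) tBot

/-- `size ≥ β`. -/
def tSizeGe : ℕ → TForm
  | 0 => .top
  | β + 1 => .sep (tSizeGe β) (.not .emp)

/-- `size = β`. -/
def tSizeEq (β : ℕ) : TForm := .and (tSizeGe β) (.not (tSizeGe (β + 1)))

/-- Finite conjunction of target formulas. -/
def bigAnd : List TForm → TForm
  | [] => .top
  | φ :: rest => .and φ (bigAnd rest)

/-- The list of variables `x₁, …, x_{2q}` of `X`. -/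
def varsX (q : ℕ) : List Var := (List.range (2 * q)).map (· + 1)

/-- `Safe(X) := (⋀_{distinct x,y ∈ X} x ≠ y) ∧ ⋀_{x ∈ X} ¬alloc⁻¹(x)`. -/
def SafeF (q : ℕ) : TForm :=
  .and
    (bigAnd ((varsX q).flatMap fun x =>
      (varsX q).filterMap fun y =>
        if x = y then none else some (.not (.eq x y))))
    (bigAnd ((varsX q).map fun x => .not (.allocInv x)))

/-- The involution `x_i ↦ x̄_i = x_{i+q}` on `X = {x₁,…,x_{2q}}`. -/
def bar (q : ℕ) (v : Var) : Var :=
  if 1 ≤ v ∧ v ≤ q then v + q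
  else if q + 1 ≤ v ∧ v ≤ 2 * q then v - q
  else v

/-- The translation `T(·, X)` of `FOSL(−∗)` formulas into `SL(∗, −∗)` extended
with `n(x)=n(y)`, `n(x)↪n(y)` and `alloc⁻¹(x)`, where `X = {x₁,…,x_{2q}}`. -/
def T (q : ℕ) : FForm → TForm
  | .eq x y => .nEq x y
  | .pto x y => .nPto x y
  | .not φ => .not (T q φ)
  | .or φ ψ => tOr (T q φ) (T q ψ)
  | .all x φ =>
      .wand (.and (tAlloc x) (tSizeEq 1)) (tImp (SafeF q) (T q φ))
  | .wand φ ψ =>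
      let Z : List Var := (FForm.fv φ).sort (· ≤ ·)
      let Zc : List Var := (varsX q).filter fun v => decide (v ∉ FForm.fv φ)
      .wand
        (.and (bigAnd (Z.map fun z => tAlloc (bar q z)))
          (.and (bigAnd (Zc.map fun z => .not (tAlloc (bar q z))))
            (.and (SafeF q) ((T q φ).rename (bar q)))))
        (tImp
          (.and (bigAnd (Z.map fun z => .nEq z (bar q z))) (SafeF q))
          (.sep (.and (bigAnd (Z.map fun z => tAlloc (bar q z))) (tSizeEq Z.length))
            (T q ψ)))

/-- Satisfaction of `FOSL(−∗)` on (standard) memory states. -/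
def FSat (s : Var → Loc) (h : Heap) : FForm → Prop
  | .eq x y => s x = s y
  | .pto x y => h.f (s x) = some (s y)
  | .not φ => ¬ FSat s h φ
  | .or φ ψ => FSat s h φ ∨ FSat s h ψ
  | .wand φ ψ => ∀ h₁ : Heap, h₁.Disj h → FSat s h₁ φ → FSat s (h.union h₁) ψ
  | .all x φ => ∀ ℓ : Loc, FSat (Function.update s x ℓ) h φ

/-- Satisfaction of the target logic (`SL(∗,−∗)` extended with `n(x)=n(y)`,
`n(x)↪n(y)` and `alloc⁻¹(x)`) on (standard) memory states. -/
def TSat (s : Var → Loc) (h : Heap) : TForm → Prop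
  | .eq x y => s x = s y
  | .pto x y => h.f (s x) = some (s y)
  | .emp => h.dom = ∅
  | .top => True
  | .nEq x y => s x ∈ h.dom ∧ s y ∈ h.dom ∧ h.f (s x) = h.f (s y)
  | .nPto x y => s x ∈ h.dom ∧ s y ∈ h.dom ∧ (h.f (s x)).bind h.f = h.f (s y)
  | .allocInv x => ∃ l : Loc, h.f l = some (s x)
  | .not φ => ¬ TSat s h φ
  | .and φ ψ => TSat s h φ ∧ TSat s h ψ
  | .sep φ ψ => ∃ h₁ h₂ : Heap, h₁.Disj h₂ ∧ h₁.union h₂ = h ∧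
      TSat s h₁ φ ∧ TSat s h₂ ψ
  | .wand φ ψ => ∀ h₁ : Heap, h₁.Disj h → TSat s h₁ φ → TSat s (h.union h₁) ψ

/-- `T_VAL(φ) := ((⋀_{i∈[1,2q]} ¬alloc(x_i)) ∧ Safe(X)) ⇒ T(φ, X)`. -/
def TVAL (q : ℕ) (φ : FForm) : TForm :=
  tImp (.and (bigAnd ((varsX q).map fun i => .not (tAlloc i))) (SafeF q))
    (T q φ)

/-! ### Heap toolkit -/

open Classical in
theorem Heap.hext {h₁ h₂ : Heap} (H : ∀ l, h₁.f l = h₂.f l) : h₁ = h₂ := by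
  cases h₁; cases h₂; simp only [Heap.mk.injEq]; exact funext H

theorem Heap.union_f (h₁ h₂ : Heap) (l : Loc) :
    (h₁.union h₂).f l = (h₁.f l).or (h₂.f l) := rfl

theorem Heap.mem_dom {h : Heap} {l : Loc} : l ∈ h.dom ↔ h.f l ≠ none := Iff.rfl

theorem Heap.dom_union (h₁ h₂ : Heap) : (h₁.union h₂).dom = h₁.dom ∪ h₂.dom := by
  ext l
  simp only [Heap.dom, Heap.union_f, Set.mem_setOf_eq, Set.mem_union]
  cases h₁.f l <;> simp [Option.or]

/-- Range of a heap. -/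
def Heap.ran (h : Heap) : Set Loc := {v | ∃ l, h.f l = some v}

theorem Heap.ran_fin (h : Heap) : h.ran.Finite := by
  have : h.ran ⊆ (fun l => (h.f l).getD 0) '' h.dom := by
    rintro v ⟨l, hl⟩
    exact ⟨l, by simp [Heap.dom, hl], by simp [hl]⟩
  exact Set.Finite.subset (h.fin.image _) this

noncomputable def Heap.single (l v : Loc) : Heap where
  f := fun l' => if l' = l then some v else none
  fin := by
    apply Set.Finite.subset (Set.finite_singleton l)
    intro l' hl'
    simp only [Set.mem_setOf_eq] at hl'
    by_contra hne
    simp [Set.mem_singleton_iff] at hne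
    simp [hne] at hl'

theorem Heap.single_f (l v l' : Loc) :
    (Heap.single l v).f l' = if l' = l then some v else none := rfl

theorem Heap.dom_single (l v : Loc) : (Heap.single l v).dom = {l} := by
  ext l'
  simp only [Heap.dom, Heap.single_f, Set.mem_setOf_eq, Set.mem_singleton_iff]
  by_cases h : l' = l <;> simp [h]

noncomputable def Heap.remove (h : Heap) (l : Loc) : Heap where
  f := fun l' => if l' = l then none else h.f l'
  fin := by
    apply Set.Finite.subset h.fin
    intro l' hl'
    simp only [Set.mem_setOf_eq] at hl' ⊢
    by_cases hq : l' = l <;> simp [hq] at hl' ⊢; exact hl'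

theorem Heap.dom_remove (h : Heap) (l : Loc) : (h.remove l).dom = h.dom \ {l} := by
  ext l'
  simp only [Heap.dom, Heap.remove, Set.mem_setOf_eq, Set.mem_diff, Set.mem_singleton_iff]
  by_cases hq : l' = l <;> simp [hq]

open scoped Classical in
noncomputable def Heap.restrict (h : Heap) (p : Loc → Prop) : Heap where
  f := fun l => if p l then h.f l else none
  fin := by
    apply Set.Finite.subset h.fin
    intro l hl
    simp only [Set.mem_setOf_eq] at hl ⊢
    by_cases hq : p l <;> simp [hq] at hl ⊢; exact hl

open scoped Classical in
theorem Heap.restrict_f (h : Heap) (p : Loc → Prop) (l : Loc) :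
    (h.restrict p).f l = if p l then h.f l else none := rfl

theorem Heap.restrict_disj (h : Heap) (p : Loc → Prop) :
    (h.restrict p).Disj (h.restrict fun l => ¬ p l) := by
  intro l
  by_cases hq : p l <;> simp [Heap.restrict_f, hq]

theorem Heap.restrict_union (h : Heap) (p : Loc → Prop) :
    (h.restrict p).union (h.restrict fun l => ¬ p l) = h := by
  apply Heap.hext
  intro l
  by_cases hq : p l <;> simp [Heap.union_f, Heap.restrict_f, hq] <;> cases h.f l <;> simp [Option.or]

theorem Heap.disj_comm {h₁ h₂ : Heap} (h : h₁.Disj h₂) : h₂.Disj h₁ := fun l => (h l).symm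

/-- On disjoint heaps the union commutes. -/
theorem Heap.union_comm {h₁ h₂ : Heap} (h : h₁.Disj h₂) : h₁.union h₂ = h₂.union h₁ := by
  apply Heap.hext
  intro l
  rcases h l with h' | h'
  · simp only [Heap.union_f, h', Option.or]; cases h₂.f l <;> rfl
  · simp only [Heap.union_f, h', Option.or]; cases h₁.f l <;> rfl
/-! ### Semantics of derived connectives -/

theorem TSat_tBot (s : Var → Loc) (h : Heap) : ¬ TSat s h tBot := by
  simp [tBot, TSat]

theorem TSat_tOr (s : Var → Loc) (h : Heap) (a b : TForm) :
    TSat s h (tOr a b) ↔ TSat s h a ∨ TSat s h b := by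
  simp only [tOr, TSat]; tauto

theorem TSat_tImp (s : Var → Loc) (h : Heap) (a b : TForm) :
    TSat s h (tImp a b) ↔ (TSat s h a → TSat s h b) := by
  simp only [tImp, tOr, TSat]; tauto

theorem TSat_tAlloc (s : Var → Loc) (h : Heap) (x : Var) :
    TSat s h (tAlloc x) ↔ s x ∈ h.dom := by
  constructor
  · intro H
    by_contra hx
    have hdisj : (Heap.single (s x) (s x)).Disj h := by
      intro l
      by_cases hl : l = s x
      · right; subst hl; simpa [Heap.mem_dom] using hx
      · left; simp [Heap.single_f, hl]
    have := H (Heap.single (s x) (s x)) hdisj (by simp [TSat, Heap.single_f])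
    exact TSat_tBot _ _ this
  · intro hx h₁ hdisj hpto
    exfalso
    have hpto' : h₁.f (s x) = some (s x) := hpto
    rcases hdisj (s x) with h' | h'
    · rw [h'] at hpto'; cases hpto'
    · exact (Heap.mem_dom.mp hx) h'

theorem TSat_bigAnd (s : Var → Loc) (h : Heap) (L : List TForm) :
    TSat s h (bigAnd L) ↔ ∀ φ ∈ L, TSat s h φ := by
  induction L with
  | nil => simp [bigAnd, TSat]
  | cons a L ih => simp [bigAnd, TSat, ih]

theorem TSat_tSizeGe (s : Var → Loc) (n : ℕ) (h : Heap) :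
    TSat s h (tSizeGe n) ↔ n ≤ h.dom.ncard := by
  induction n generalizing h with
  | zero => simp [tSizeGe, TSat]
  | succ n ih =>
    simp only [tSizeGe, TSat]
    constructor
    · rintro ⟨h₁, h₂, hdisj, huni, hs1, hs2⟩
      have hdom : h.dom = h₁.dom ∪ h₂.dom := by rw [← huni, Heap.dom_union]
      have hdisj' : Disjoint h₁.dom h₂.dom := by
        rw [Set.disjoint_left]
        intro l hl1 hl2
        rcases hdisj l with h' | h' <;> simp [Heap.mem_dom, h'] at hl1 hl2
      have hcard : h.dom.ncard = h₁.dom.ncard + h₂.dom.ncard := by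
        rw [hdom, Set.ncard_union_eq hdisj' h₁.fin h₂.fin]
      have h2ne : h₂.dom.Nonempty := by
        rw [Set.nonempty_iff_ne_empty]; exact hs2
      have h1le : 0 < h₂.dom.ncard := (Set.ncard_pos h₂.fin).mpr h2ne
      have hs1' := (ih h₁).mp hs1
      omega
    · intro hn
      have hne : h.dom.Nonempty := by
        rw [Set.nonempty_iff_ne_empty]
        intro he
        rw [he] at hn; simp at hn
      obtain ⟨l, hl⟩ := hne
      obtain ⟨v, hv⟩ : ∃ v, h.f l = some v := by
        cases hfl : h.f l
        · exact absurd hfl (Heap.mem_dom.mp hl)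
        · exact ⟨_, rfl⟩
      refine ⟨h.remove l, Heap.single l v, ?_, ?_, ?_, ?_⟩
      · intro l'
        by_cases hq : l' = l
        · left; simp [Heap.remove, hq]
        · right; simp [Heap.single_f, hq]
      · apply Heap.hext
        intro l'
        by_cases hq : l' = l
        · subst hq; simp [Heap.union_f, Heap.remove, Heap.single_f, hv, Option.or]
        · simp only [Heap.union_f, Heap.remove, Heap.single_f, if_neg hq, Option.or]
          cases h.f l' <;> rfl
      · rw [ih, Heap.dom_remove]
        have : (h.dom \ {l}).ncard = h.dom.ncard - 1 := by
          rw [Set.ncard_diff_singleton_of_mem hl]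
        omega
      · simp [TSat, Heap.dom_single]

theorem TSat_tSizeEq (s : Var → Loc) (n : ℕ) (h : Heap) :
    TSat s h (tSizeEq n) ↔ h.dom.ncard = n := by
  have h1 := TSat_tSizeGe s n h
  have h2 := TSat_tSizeGe s (n + 1) h
  constructor
  · rintro ⟨a, b⟩
    have ha := h1.mp a
    have hb : ¬ (n + 1 ≤ h.dom.ncard) := fun x => b (h2.mpr x)
    omega
  · intro e
    exact ⟨h1.mpr (by omega), fun c => by have := h2.mp c; omega⟩

theorem mem_varsX {q v : ℕ} : v ∈ varsX q ↔ 1 ≤ v ∧ v ≤ 2 * q := by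
  simp only [varsX, List.mem_map, List.mem_range]
  constructor
  · rintro ⟨i, hi, rfl⟩; omega
  · intro ⟨h1, h2⟩; exact ⟨v - 1, by omega, by omega⟩

theorem TSat_SafeF (s : Var → Loc) (h : Heap) (q : ℕ) :
    TSat s h (SafeF q) ↔
      (∀ i ∈ Finset.Icc 1 (2 * q), ∀ j ∈ Finset.Icc 1 (2 * q), i ≠ j → s i ≠ s j) ∧
      (∀ i ∈ Finset.Icc 1 (2 * q), ∀ l, h.f l ≠ some (s i)) := by
  simp only [SafeF, TSat, TSat_bigAnd]
  constructor
  · rintro ⟨H1, H2⟩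
    constructor
    · intro i hi j hj hij
      simp only [Finset.mem_Icc] at hi hj
      have := H1 (.not (.eq i j)) (by
        simp only [List.mem_flatMap, List.mem_filterMap]
        exact ⟨i, mem_varsX.mpr hi, j, mem_varsX.mpr hj, by simp [hij]⟩)
      exact this
    · intro i hi l hl
      simp only [Finset.mem_Icc] at hi
      have := H2 (.not (.allocInv i)) (by
        simp only [List.mem_map]
        exact ⟨i, mem_varsX.mpr hi, rfl⟩)
      exact this ⟨l, hl⟩
  · rintro ⟨H1, H2⟩
    constructor
    · intro ψ hψ
      simp only [List.mem_flatMap, List.mem_filterMap] at hψ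
      obtain ⟨x, hx, y, hy, hxy⟩ := hψ
      by_cases hq : x = y
      · simp [hq] at hxy
      · rw [if_neg hq] at hxy
        cases hxy
        intro heq
        exact H1 x (Finset.mem_Icc.mpr (mem_varsX.mp hx)) y (Finset.mem_Icc.mpr (mem_varsX.mp hy))
          hq heq
    · intro ψ hψ
      simp only [List.mem_map] at hψ
      obtain ⟨x, hx, rfl⟩ := hψ
      rw [mem_varsX] at hx
      intro ⟨l, hl⟩
      exact H2 x (Finset.mem_Icc.mpr hx) l hl

theorem TSat_rename (s : Var → Loc) (h : Heap) (ρ : Var → Var) (φ : TForm) :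
    TSat s h (φ.rename ρ) ↔ TSat (s ∘ ρ) h φ := by
  induction φ generalizing h with
  | eq x y => simp [TForm.rename, TSat, Function.comp]
  | pto x y => simp [TForm.rename, TSat, Function.comp]
  | emp => simp [TForm.rename, TSat]
  | top => simp [TForm.rename, TSat]
  | nEq x y => simp [TForm.rename, TSat, Function.comp]
  | nPto x y => simp [TForm.rename, TSat, Function.comp]
  | allocInv x => simp [TForm.rename, TSat, Function.comp]
  | not φ ih => simp [TForm.rename, TSat, ih]
  | and φ ψ ih₁ ih₂ => simp [TForm.rename, TSat, ih₁, ih₂]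
  | sep φ ψ ih₁ ih₂ => simp [TForm.rename, TSat, ih₁, ih₂]
  | wand φ ψ ih₁ ih₂ => simp [TForm.rename, TSat, ih₁, ih₂]
/-! ### Free variables and permutations -/

theorem FSat_fv {φ : FForm} {s s' : Var → Loc} {h : Heap}
    (H : ∀ x ∈ φ.fv, s x = s' x) : FSat s h φ ↔ FSat s' h φ := by
  induction φ generalizing s s' h with
  | eq x y =>
    simp only [FSat]
    rw [H x (by simp [FForm.fv]), H y (by simp [FForm.fv])]
  | pto x y =>
    simp only [FSat]
    rw [H x (by simp [FForm.fv]), H y (by simp [FForm.fv])]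
  | not φ ih => simp only [FSat]; rw [ih H]
  | or φ ψ ih₁ ih₂ =>
    simp only [FSat]
    rw [ih₁ fun x hx => H x (by simp [FForm.fv, hx]),
        ih₂ fun x hx => H x (by simp [FForm.fv, hx])]
  | wand φ ψ ih₁ ih₂ =>
    simp only [FSat]
    constructor <;> intro W h₁ hd hs
    · rw [← ih₂ fun x hx => H x (by simp [FForm.fv, hx])]
      exact W h₁ hd ((ih₁ fun x hx => H x (by simp [FForm.fv, hx])).mpr hs)
    · rw [ih₂ fun x hx => H x (by simp [FForm.fv, hx])]
      exact W h₁ hd ((ih₁ fun x hx => H x (by simp [FForm.fv, hx])).mp hs)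
  | all x φ ih =>
    simp only [FSat]
    constructor <;> intro W ℓ
    · rw [← ih (s := Function.update s x ℓ)]
      · exact W ℓ
      · intro y hy
        by_cases hxy : y = x
        · subst hxy; simp [Function.update]
        · simp only [Function.update, dif_neg hxy]
          exact H y (by simp [FForm.fv, Finset.mem_erase, hxy, hy])
    · rw [ih (s' := Function.update s' x ℓ)]
      · exact W ℓ
      · intro y hy
        by_cases hxy : y = x
        · subst hxy; simp [Function.update]
        · simp only [Function.update, dif_neg hxy]
          exact H y (by simp [FForm.fv, Finset.mem_erase, hxy, hy])

/-- The action of a permutation of locations on a heap. -/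
noncomputable def Heap.perm (h : Heap) (π : Equiv.Perm Loc) : Heap where
  f := fun l => (h.f (π.symm l)).map π
  fin := by
    apply Set.Finite.subset (h.fin.image π)
    intro l hl
    simp only [Set.mem_setOf_eq] at hl
    refine ⟨π.symm l, ?_, by simp⟩
    simp only [Set.mem_setOf_eq]
    intro hc
    simp [hc] at hl

theorem Heap.perm_f (h : Heap) (π : Equiv.Perm Loc) (l : Loc) :
    (h.perm π).f (π l) = (h.f l).map π := by
  simp [Heap.perm]

theorem Heap.perm_f' (h : Heap) (π : Equiv.Perm Loc) (l : Loc) :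
    (h.perm π).f l = (h.f (π.symm l)).map π := rfl

theorem Heap.perm_union (h₁ h₂ : Heap) (π : Equiv.Perm Loc) :
    (h₁.union h₂).perm π = (h₁.perm π).union (h₂.perm π) := by
  apply Heap.hext
  intro l
  simp only [Heap.perm_f', Heap.union_f]
  cases h₁.f (π.symm l) <;> simp [Option.or]

theorem Heap.perm_disj {h₁ h₂ : Heap} (hd : h₁.Disj h₂) (π : Equiv.Perm Loc) :
    (h₁.perm π).Disj (h₂.perm π) := by
  intro l
  rcases hd (π.symm l) with h' | h' <;> [left; right] <;> simp [Heap.perm_f', h']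

theorem Heap.perm_perm_symm (h : Heap) (π : Equiv.Perm Loc) :
    (h.perm π).perm π.symm = h := by
  apply Heap.hext
  intro l
  simp only [Heap.perm_f', Equiv.symm_symm, Equiv.symm_apply_apply]
  cases h.f l <;> simp

theorem Heap.perm_symm_perm (h : Heap) (π : Equiv.Perm Loc) :
    (h.perm π.symm).perm π = h := by
  have := Heap.perm_perm_symm h π.symm
  simpa using this

theorem Heap.dom_perm (h : Heap) (π : Equiv.Perm Loc) :
    (h.perm π).dom = π '' h.dom := by
  ext l
  simp only [Heap.dom, Heap.perm_f', Set.mem_setOf_eq, Set.mem_image]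
  constructor
  · intro hl
    refine ⟨π.symm l, ?_, by simp⟩
    intro hc; simp [hc] at hl
  · rintro ⟨m, hm, rfl⟩
    simp only [Equiv.symm_apply_apply]
    intro hc
    apply hm
    cases hcc : h.f m
    · rfl
    · simp [hcc] at hc

theorem Heap.ran_perm (h : Heap) (π : Equiv.Perm Loc) :
    (h.perm π).ran = π '' h.ran := by
  ext v
  simp only [Heap.ran, Heap.perm_f', Set.mem_setOf_eq, Set.mem_image]
  constructor
  · rintro ⟨l, hl⟩
    cases hc : h.f (π.symm l)
    · simp [hc] at hl
    · simp [hc] at hl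
      exact ⟨_, ⟨_, hc⟩, hl⟩
  · rintro ⟨w, ⟨l, hl⟩, rfl⟩
    exact ⟨π l, by simp [hl]⟩

theorem FSat_perm (π : Equiv.Perm Loc) {φ : FForm} {s : Var → Loc} {h : Heap} :
    FSat (π ∘ s) (h.perm π) φ ↔ FSat s h φ := by
  induction φ generalizing s h with
  | eq x y =>
    simp only [FSat, Function.comp]
    exact ⟨fun H => π.injective H, fun H => by rw [H]⟩
  | pto x y =>
    simp only [FSat, Function.comp]
    rw [Heap.perm_f]
    cases h.f (s x) <;> simp
  | not φ ih => simp only [FSat]; rw [ih]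
  | or φ ψ ih₁ ih₂ => simp only [FSat]; rw [ih₁, ih₂]
  | wand φ ψ ih₁ ih₂ =>
    simp only [FSat]
    constructor
    · intro W h₁ hd hs
      have := W (h₁.perm π) (Heap.perm_disj hd π) (ih₁.mpr hs)
      rw [← Heap.perm_union] at this
      exact ih₂.mp this
    · intro W h₁ hd hs
      have hd' : (h₁.perm π.symm).Disj h := by
        have := Heap.perm_disj hd π.symm
        rwa [Heap.perm_perm_symm] at this
      have hs' : FSat s (h₁.perm π.symm) φ := by
        rw [← ih₁ (h := h₁.perm π.symm)]
        rw [Heap.perm_symm_perm]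
        exact hs
      have := W _ hd' hs'
      have h2 := ih₂.mpr this
      rw [Heap.perm_union] at h2
      rwa [Heap.perm_symm_perm] at h2
  | all x φ ih =>
    simp only [FSat]
    constructor
    · intro W ℓ
      have := W (π ℓ)
      rw [show Function.update (π ∘ s) x (π ℓ) = π ∘ Function.update s x ℓ by
        funext y; by_cases hy : y = x <;> simp [Function.update, hy]] at this
      exact ih.mp this
    · intro W ℓ
      have := ih.mpr (W (π.symm ℓ))
      rw [show π ∘ Function.update s x (π.symm ℓ) = Function.update (π ∘ s) x ℓ by
        funext y; by_cases hy : y = x <;> simp [Function.update, hy]] at this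
      exact this

/-- A permutation fixing the domain and range of a heap pointwise fixes the heap. -/
theorem Heap.perm_fixed {h : Heap} {π : Equiv.Perm Loc}
    (H : ∀ l, l ∈ h.dom ∪ h.ran → π l = l) : h.perm π = h := by
  apply Heap.hext
  intro l
  by_cases hl : l ∈ h.dom
  · have hfix : π l = l := H l (Or.inl hl)
    have hsl : π.symm l = l := by
      conv_lhs => rw [← hfix]
      simp
    rw [Heap.perm_f', hsl]
    cases hc : h.f l
    · rfl
    · simp only [Option.map_some]
      rw [H _ (Or.inr ⟨l, hc⟩)]
  · have hsl : π.symm l ∉ h.dom := by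
      intro hc
      have : π (π.symm l) = π.symm l := H _ (Or.inl hc)
      simp only [Equiv.apply_symm_apply] at this
      rw [← this] at hc
      exact hl hc
    have h1 : h.f (π.symm l) = none := by
      by_contra hc
      exact hsl hc
    have h2 : h.f l = none := by
      by_contra hc
      exact hl hc
    rw [Heap.perm_f', h1, h2]
    rfl

theorem perm_fix_closed {π : Equiv.Perm Loc} {F : Set Loc}
    (hF : ∀ l ∈ F, π l = l) {l : Loc} (h : π l ∈ F) : π l = l := by
  have := hF _ h
  exact π.injective this

/-- There is a permutation fixing `F` pointwise and moving `D` off `S`. -/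
theorem exists_clean_perm (S : Finset Loc) :
    ∀ (F D : Finset Loc), (∀ l ∈ S, l ∉ F) →
    ∃ π : Equiv.Perm Loc, (∀ l ∈ F, π l = l) ∧ ∀ l ∈ D, π l ∉ S := by
  induction S using Finset.induction_on with
  | empty => exact fun F D _ => ⟨1, by simp, by simp⟩
  | @insert a S ha ih =>
    intro F D hSF
    obtain ⟨π, hπF, hπD⟩ := ih F D (fun l hl => hSF l (Finset.mem_insert_of_mem hl))
    obtain ⟨t, ht⟩ := Infinite.exists_notMem_finset
      (F ∪ S ∪ insert a (D.image π))
    simp only [Finset.mem_union, Finset.mem_insert, Finset.mem_image, not_or, not_exists] at ht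
    obtain ⟨⟨htF, htS⟩, hta, htD⟩ := ht
    refine ⟨π.trans (Equiv.swap a t), ?_, ?_⟩
    · intro l hl
      simp only [Equiv.trans_apply, hπF l hl]
      rw [Equiv.swap_apply_of_ne_of_ne]
      · intro hc; exact hSF a (Finset.mem_insert_self a S) (hc ▸ hl)
      · intro hc; exact htF (hc ▸ hl)
    · intro l hl
      simp only [Equiv.trans_apply, Finset.mem_insert]
      by_cases hc : π l = a
      · rw [hc, Equiv.swap_apply_left]
        push_neg
        exact ⟨hta, htS⟩
      · have hnt : π l ≠ t := fun hc' => htD l ⟨hl, hc'⟩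
        rw [Equiv.swap_apply_of_ne_of_ne hc hnt]
        push_neg
        exact ⟨hc, fun hS => hπD l hl hS⟩

/-- Heap of cells at `t x`, `x ∈ B`, with values `v x`. -/
noncomputable def cells (B : Finset Var) (t v : Var → Loc) : Heap where
  f := fun l => if hl : ∃ x, x ∈ B ∧ t x = l then some (v hl.choose) else none
  fin := by
    apply Set.Finite.subset (B.finite_toSet.image t)
    intro l hl
    simp only [Set.mem_setOf_eq] at hl
    by_cases hc : ∃ x, x ∈ B ∧ t x = l
    · obtain ⟨x, hx, rfl⟩ := hc
      exact ⟨x, hx, rfl⟩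
    · exact absurd (dif_neg hc) hl

theorem cells_f_none {B : Finset Var} {t v : Var → Loc} {l : Loc}
    (h : ∀ x ∈ B, t x ≠ l) : (cells B t v).f l = none := by
  have : ¬ ∃ x, x ∈ B ∧ t x = l := by
    rintro ⟨x, hx, rfl⟩
    exact h x hx rfl
  simp [cells, dif_neg this]

theorem cells_f_mem {B : Finset Var} {t v : Var → Loc}
    (hinj : ∀ x ∈ B, ∀ y ∈ B, t x = t y → x = y) {x : Var} (hx : x ∈ B) :
    (cells B t v).f (t x) = some (v x) := by
  have hex : ∃ y, y ∈ B ∧ t y = t x := ⟨x, hx, rfl⟩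
  have := hex.choose_spec
  have hxy : hex.choose = x := hinj _ this.1 _ hx this.2
  simp [cells, dif_pos hex, hxy]

theorem cells_dom {B : Finset Var} {t v : Var → Loc} :
    (cells B t v).dom = {l | ∃ x ∈ B, t x = l} := by
  ext l
  simp only [Heap.dom, Set.mem_setOf_eq]
  by_cases hc : ∃ x, x ∈ B ∧ t x = l
  · simp [cells, dif_pos hc]
    obtain ⟨x, hx, rfl⟩ := hc
    exact ⟨x, hx, rfl⟩
  · simp [cells, dif_neg hc]
    rintro x hx rfl
    exact hc ⟨x, hx, rfl⟩
/-! ### The `bar` involution -/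

theorem mem_Icc' {a b v : ℕ} : v ∈ Finset.Icc a b ↔ a ≤ v ∧ v ≤ b := Finset.mem_Icc

theorem bar_low {q v : ℕ} (h1 : 1 ≤ v) (h2 : v ≤ q) : bar q v = v + q := by
  simp [bar, h1, h2]

theorem bar_high {q v : ℕ} (h1 : q + 1 ≤ v) (h2 : v ≤ 2 * q) : bar q v = v - q := by
  have : ¬(1 ≤ v ∧ v ≤ q) := by omega
  simp [bar, this, h1, h2]

theorem bar_memX {q v : ℕ} (h : v ∈ Finset.Icc 1 (2 * q)) :
    bar q v ∈ Finset.Icc 1 (2 * q) := by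
  simp only [mem_Icc'] at h ⊢
  by_cases hc : v ≤ q
  · rw [bar_low h.1 hc]; omega
  · rw [bar_high (by omega) h.2]; omega

theorem bar_bar {q v : ℕ} (h : v ∈ Finset.Icc 1 (2 * q)) : bar q (bar q v) = v := by
  simp only [mem_Icc'] at h
  by_cases hc : v ≤ q
  · rw [bar_low h.1 hc, bar_high (q := q) (v := v + q) (by omega) (by omega)]; show @Eq ℕ _ _; omega
  · rw [bar_high (by omega) h.2, bar_low (q := q) (v := v - q) (by omega) (by omega)]; show @Eq ℕ _ _; omega

theorem bar_inj {q v w : ℕ} (hv : v ∈ Finset.Icc 1 (2 * q)) (hw : w ∈ Finset.Icc 1 (2 * q))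
    (h : bar q v = bar q w) : v = w := by
  have := bar_bar hv
  rw [h, bar_bar hw] at this
  exact this.symm

/-! ### The encoding invariant -/

/-- The index set `X` as a finset. -/
def Xf (q : ℕ) : Finset Var := Finset.Icc 1 (2 * q)

/-- `(s', h')` encodes the `FOSL` memory state `(σ, hp)` with active variables `A`. -/
structure Enc (q : ℕ) (s' : Var → Loc) (A : Finset Var) (σ : Var → Loc)
    (hp h' : Heap) : Prop where
  inj : ∀ i ∈ Xf q, ∀ j ∈ Xf q, s' i = s' j → i = j
  Asub : A ⊆ Finset.Icc 1 q
  cell : ∀ x ∈ A, h'.f (s' x) = some (σ x)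
  nocell : ∀ i ∈ Xf q, i ∉ A → h'.f (s' i) = none
  rest : ∀ l, (∀ i ∈ Xf q, s' i ≠ l) → h'.f l = hp.f l
  hpX : ∀ i ∈ Xf q, hp.f (s' i) = none
  hpran : ∀ i ∈ Xf q, ∀ l, hp.f l ≠ some (s' i)
  sX : ∀ x ∈ A, ∀ i ∈ Xf q, σ x ≠ s' i

theorem Icc_sub_Xf (q : ℕ) : Finset.Icc 1 q ⊆ Xf q :=
  Finset.Icc_subset_Icc (le_refl 1) (by omega)

theorem Enc.AsubX {q s' A σ hp h'} (E : Enc q s' A σ hp h') : A ⊆ Xf q :=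
  E.Asub.trans (Icc_sub_Xf q)

theorem Enc.ranClean {q s' A σ hp h'} (E : Enc q s' A σ hp h') :
    ∀ i ∈ Xf q, ∀ l, h'.f l ≠ some (s' i) := by
  intro i hi l
  by_cases hl : ∃ j ∈ Xf q, s' j = l
  · obtain ⟨j, hj, rfl⟩ := hl
    by_cases hj' : j ∈ A
    · rw [E.cell j hj']
      intro hc
      exact E.sX j hj' i hi (Option.some.inj hc)
    · rw [E.nocell j hj hj']; simp
  · push_neg at hl
    rw [E.rest l hl]
    exact E.hpran i hi l

theorem Enc.safe {q s' A σ hp h'} (E : Enc q s' A σ hp h') : TSat s' h' (SafeF q) := by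
  rw [TSat_SafeF]
  refine ⟨fun i hi j hj hij hc => hij (E.inj i hi j hj hc), fun i hi l => E.ranClean i hi l⟩

theorem Enc.domCell {q s' A σ hp h'} (E : Enc q s' A σ hp h') {x : Var} (hx : x ∈ A) :
    s' x ∈ h'.dom := by
  rw [Heap.mem_dom, E.cell x hx]; simp

/-! ### Correctness of the translation -/

theorem TCorrect (q : ℕ) (φ : FForm) :
    ∀ (s' σ : Var → Loc) (A : Finset Var) (hp h' : Heap),
      Enc q s' A σ hp h' → φ.fv ⊆ A →
      (∀ x ∈ φ.binderList, x ∈ Finset.Icc 1 q ∧ x ∉ A) →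
      φ.binderList.Nodup →
      (FSat σ hp φ ↔ TSat s' h' (T q φ)) := by
  induction φ with
  | eq x y =>
    intro s' σ A hp h' E hfv _ _
    have hx : x ∈ A := hfv (by simp [FForm.fv])
    have hy : y ∈ A := hfv (by simp [FForm.fv])
    simp only [FSat, T, TSat]
    constructor
    · intro hxy
      exact ⟨E.domCell hx, E.domCell hy, by rw [E.cell x hx, E.cell y hy, hxy]⟩
    · rintro ⟨_, _, h3⟩
      rw [E.cell x hx, E.cell y hy] at h3
      exact Option.some.inj h3
  | pto x y =>
    intro s' σ A hp h' E hfv _ _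
    have hx : x ∈ A := hfv (by simp [FForm.fv])
    have hy : y ∈ A := hfv (by simp [FForm.fv])
    have key : h'.f (σ x) = hp.f (σ x) :=
      E.rest (σ x) (fun i hi hc => E.sX x hx i hi hc.symm)
    simp only [FSat, T, TSat]
    constructor
    · intro hF
      refine ⟨E.domCell hx, E.domCell hy, ?_⟩
      rw [E.cell x hx, E.cell y hy]
      simp only [Option.bind_some]
      rw [key]
      exact hF
    · rintro ⟨_, _, h3⟩
      rw [E.cell x hx, E.cell y hy] at h3
      simp only [Option.bind_some] at h3
      rw [key] at h3
      exact h3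
  | not φ ih =>
    intro s' σ A hp h' E hfv hbnd hnd
    simp only [FSat, T, TSat]
    rw [ih s' σ A hp h' E hfv hbnd hnd]
  | or φ ψ ih₁ ih₂ =>
    intro s' σ A hp h' E hfv hbnd hnd
    simp only [FForm.fv, FForm.binderList] at hfv hbnd hnd
    rw [List.nodup_append] at hnd
    have hfv₁ : φ.fv ⊆ A := fun x hx => hfv (Finset.mem_union_left _ hx)
    have hfv₂ : ψ.fv ⊆ A := fun x hx => hfv (Finset.mem_union_right _ hx)
    simp only [FSat, T]
    rw [TSat_tOr, ih₁ s' σ A hp h' E hfv₁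
        (fun x hx => hbnd x (List.mem_append_left _ hx)) hnd.1,
      ih₂ s' σ A hp h' E hfv₂
        (fun x hx => hbnd x (List.mem_append_right _ hx)) hnd.2.1]
  | all x φ ih =>
    intro s' σ A hp h' E hfv hbnd hnd
    have hxbnd := hbnd x (by simp [FForm.binderList])
    have hxq : x ∈ Finset.Icc 1 q := hxbnd.1
    have hxA : x ∉ A := hxbnd.2
    have hxX : x ∈ Xf q := Icc_sub_Xf q hxq
    have hfvφ : φ.fv ⊆ insert x A := by
      intro y hy
      by_cases hxy : y = x
      · subst hxy; exact Finset.mem_insert_self _ _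
      · exact Finset.mem_insert_of_mem (hfv (Finset.mem_erase.mpr ⟨hxy, hy⟩))
    simp only [FForm.binderList] at hnd hbnd
    have hnd' := List.nodup_cons.mp hnd
    have hbndφ : ∀ y ∈ φ.binderList, y ∈ Finset.Icc 1 q ∧ y ∉ insert x A := by
      intro y hy
      have h1 := hbnd y (List.mem_cons_of_mem _ hy)
      refine ⟨h1.1, ?_⟩
      intro hc
      rcases Finset.mem_insert.mp hc with rfl | hc'
      · exact hnd'.1 hy
      · exact h1.2 hc'
    have key : ∀ ℓ : Loc, (∀ i ∈ Xf q, ℓ ≠ s' i) →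
        ∀ h₁ : Heap, h₁.Disj h' → h₁.f (s' x) = some ℓ →
        (∀ l, l ≠ s' x → h₁.f l = none) →
        Enc q s' (insert x A) (Function.update σ x ℓ) hp (h'.union h₁) := by
      intro ℓ hℓ h₁ hdisj hf hnone
      constructor
      · exact E.inj
      · exact Finset.insert_subset_iff.mpr ⟨hxq, E.Asub⟩
      · intro y hy
        rcases Finset.mem_insert.mp hy with rfl | hy'
        · rw [Heap.union_f, E.nocell y hxX hxA, hf]
          simp [Function.update, Option.or]
        · have hyx : y ≠ x := fun hc => hxA (hc ▸ hy')
          rw [Heap.union_f, E.cell y hy']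
          simp [Function.update, hyx, Option.or]
      · intro i hi hiA
        have hix : i ≠ x := fun hc => hiA (hc ▸ Finset.mem_insert_self x A)
        have hsix : s' i ≠ s' x := fun hc => hix (E.inj i hi x hxX hc)
        rw [Heap.union_f, E.nocell i hi (fun hc => hiA (Finset.mem_insert_of_mem hc)),
          hnone _ hsix]
        rfl
      · intro l hl
        rw [Heap.union_f, E.rest l hl, hnone l (fun hc => hl x hxX hc.symm)]
        cases hp.f l <;> rfl
      · exact E.hpX
      · exact E.hpran
      · intro y hy i hi
        rcases Finset.mem_insert.mp hy with rfl | hy'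
        · simpa [Function.update] using hℓ i hi
        · have hyx : y ≠ x := fun hc => hxA (hc ▸ hy')
          simp only [Function.update, dif_neg hyx]
          exact E.sX y hy' i hi
    simp only [FSat, T]
    constructor
    · -- `FSat all → TSat` of the translation
      intro W h₁ hdisj hprem
      have halloc : s' x ∈ h₁.dom := (TSat_tAlloc s' h₁ x).mp hprem.1
      have hsize : h₁.dom.ncard = 1 := (TSat_tSizeEq s' 1 h₁).mp hprem.2
      have hdom : h₁.dom = {s' x} := by
        obtain ⟨a, ha⟩ := Set.ncard_eq_one.mp hsize
        rw [ha] at halloc ⊢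
        rw [Set.mem_singleton_iff] at halloc
        rw [halloc]
      obtain ⟨ℓ, hℓ⟩ : ∃ ℓ, h₁.f (s' x) = some ℓ := by
        cases hc : h₁.f (s' x)
        · exact absurd hc halloc
        · exact ⟨_, rfl⟩
      have hnone : ∀ l, l ≠ s' x → h₁.f l = none := by
        intro l hl
        by_contra hc
        have : l ∈ h₁.dom := hc
        rw [hdom, Set.mem_singleton_iff] at this
        exact hl this
      rw [TSat_tImp]
      intro hsafe
      rw [TSat_SafeF] at hsafe
      have hℓX : ∀ i ∈ Xf q, ℓ ≠ s' i := by
        intro i hi hc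
        apply hsafe.2 i hi (s' x)
        rw [Heap.union_f, E.nocell x hxX hxA, hℓ, ← hc]
        rfl
      have E' := key ℓ hℓX h₁ hdisj hℓ hnone
      exact (ih s' (Function.update σ x ℓ) (insert x A) hp (h'.union h₁) E' hfvφ hbndφ
        hnd'.2).mp (W ℓ)
    · -- `TSat` of the translation → `FSat all`
      intro W
      have good : ∀ ℓ, (∀ i ∈ Xf q, ℓ ≠ s' i) → FSat (Function.update σ x ℓ) hp φ := by
        intro ℓ hℓ
        have hd : (Heap.single (s' x) ℓ).Disj h' := by
          intro l
          by_cases hc : l = s' x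
          · right; subst hc; exact E.nocell x hxX hxA
          · left; simp [Heap.single_f, hc]
        have hprem : TSat s' (Heap.single (s' x) ℓ) (.and (tAlloc x) (tSizeEq 1)) := by
          refine ⟨?_, ?_⟩
          · rw [TSat_tAlloc, Heap.dom_single]
            exact rfl
          · rw [TSat_tSizeEq, Heap.dom_single]
            simp
        have hcon := W (Heap.single (s' x) ℓ) hd hprem
        rw [TSat_tImp] at hcon
        have hsafe : TSat s' (h'.union (Heap.single (s' x) ℓ)) (SafeF q) := by
          rw [TSat_SafeF]
          refine ⟨fun i hi j hj hij hc => hij (E.inj i hi j hj hc), ?_⟩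
          intro i hi l hc
          rw [Heap.union_f] at hc
          cases hcl : h'.f l with
          | some w =>
            rw [hcl] at hc
            exact E.ranClean i hi l (by rw [hcl]; exact hc)
          | none =>
            rw [hcl] at hc
            have : (Heap.single (s' x) ℓ).f l = some (s' i) := hc
            rw [Heap.single_f] at this
            by_cases hls : l = s' x
            · rw [if_pos hls] at this
              exact hℓ i hi (Option.some.inj this)
            · rw [if_neg hls] at this
              cases this
        have htψ := hcon hsafe
        have E' := key ℓ hℓ (Heap.single (s' x) ℓ) hd (by simp [Heap.single_f])
          (fun l hl => by simp [Heap.single_f, hl])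
        exact (ih s' (Function.update σ x ℓ) (insert x A) hp _ E' hfvφ hbndφ hnd'.2).mpr htψ
      intro ℓ
      by_cases hgood : ∀ i ∈ Xf q, ℓ ≠ s' i
      · exact good ℓ hgood
      · push_neg at hgood
        obtain ⟨i₀, hi₀, hℓeq⟩ := hgood
        obtain ⟨ℓ', hℓ'⟩ := Infinite.exists_notMem_finset
          ((((Xf q).image s') ∪ hp.fin.toFinset ∪ hp.ran_fin.toFinset) ∪ A.image σ)
        simp only [Finset.mem_union, not_or, Finset.mem_image, not_exists,
          Set.Finite.mem_toFinset] at hℓ'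
        obtain ⟨⟨⟨hℓ'X, hℓ'dom⟩, hℓ'ran⟩, hℓ'σ⟩ := hℓ'
        have hgood' : ∀ i ∈ Xf q, ℓ' ≠ s' i := by
          intro i hi hc
          exact hℓ'X i ⟨hi, hc.symm⟩
        have hF := good ℓ' hgood'
        have hperm := (FSat_perm (Equiv.swap ℓ ℓ') (φ := φ)
          (s := Function.update σ x ℓ') (h := hp)).mpr hF
        have hℓdom : ℓ ∉ hp.dom := by
          rw [hℓeq, Heap.mem_dom]
          simp [E.hpX i₀ hi₀]
        have hℓran : ℓ ∉ hp.ran := by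
          rw [hℓeq]
          rintro ⟨l, hl⟩
          exact E.hpran i₀ hi₀ l hl
        have hfix : hp.perm (Equiv.swap ℓ ℓ') = hp := by
          apply Heap.perm_fixed
          intro l hl
          apply Equiv.swap_apply_of_ne_of_ne
          · rintro rfl
            rcases hl with hl | hl
            · exact hℓdom hl
            · exact hℓran hl
          · rintro rfl
            rcases hl with hl | hl
            · exact hℓ'dom (Set.mem_setOf_eq ▸ hl)
            · exact hℓ'ran hl
        rw [hfix] at hperm
        rw [FSat_fv (s' := Function.update σ x ℓ)] at hperm
        · exact hperm
        · intro y hy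
          have hy' := hfvφ hy
          by_cases hyx : y = x
          · subst hyx
            simp only [Function.comp, Function.update_self]
            exact Equiv.swap_apply_right ℓ ℓ'
          · rcases Finset.mem_insert.mp hy' with hc | hyA
            · exact absurd hc hyx
            · simp only [Function.comp, Function.update, dif_neg hyx]
              apply Equiv.swap_apply_of_ne_of_ne
              · rw [hℓeq]
                exact E.sX y hyA i₀ hi₀
              · exact fun hc => hℓ'σ y ⟨hyA, hc⟩
  | wand φ ψ ih₁ ih₂ =>
    intro s' σ A hp h' E hfv hbnd hnd
    simp only [FForm.fv, FForm.binderList] at hfv hbnd hnd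
    rw [List.nodup_append] at hnd
    have hfv₁ : φ.fv ⊆ A := fun x hx => hfv (Finset.mem_union_left _ hx)
    have hfv₂ : ψ.fv ⊆ A := fun x hx => hfv (Finset.mem_union_right _ hx)
    have hbnd₁ : ∀ x ∈ φ.binderList, x ∈ Finset.Icc 1 q ∧ x ∉ A :=
      fun x hx => hbnd x (List.mem_append_left _ hx)
    have hbnd₂ : ∀ x ∈ ψ.binderList, x ∈ Finset.Icc 1 q ∧ x ∉ A :=
      fun x hx => hbnd x (List.mem_append_right _ hx)
    have hbndZ : ∀ x ∈ φ.binderList, x ∈ Finset.Icc 1 q ∧ x ∉ φ.fv :=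
      fun x hx => ⟨(hbnd₁ x hx).1, fun hc => (hbnd₁ x hx).2 (hfv₁ hc)⟩
    -- abbreviations
    set Zl : List Var := (FForm.fv φ).sort (· ≤ ·) with hZl
    set Zc : List Var := (varsX q).filter (fun v => decide (v ∉ FForm.fv φ)) with hZc
    have hZmem : ∀ z, z ∈ Zl ↔ z ∈ φ.fv := fun z => Finset.mem_sort _
    have hZcmem : ∀ v, v ∈ Zc ↔ (v ∈ Finset.Icc 1 (2 * q) ∧ v ∉ φ.fv) := by
      intro v
      rw [hZc, List.mem_filter]
      constructor
      · rintro ⟨h1, h2⟩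
        exact ⟨Finset.mem_Icc.mpr (mem_varsX.mp h1), by simpa using h2⟩
      · rintro ⟨h1, h2⟩
        exact ⟨mem_varsX.mpr (Finset.mem_Icc.mp h1), by simpa using h2⟩
    have hZlen : Zl.length = (φ.fv).card := Finset.length_sort _
    have hT : T q (.wand φ ψ) =
        .wand
          (.and (bigAnd (Zl.map fun z => tAlloc (bar q z)))
            (.and (bigAnd (Zc.map fun z => .not (tAlloc (bar q z))))
              (.and (SafeF q) ((T q φ).rename (bar q)))))
          (tImp
            (.and (bigAnd (Zl.map fun z => .nEq z (bar q z))) (SafeF q))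
            (.sep (.and (bigAnd (Zl.map fun z => tAlloc (bar q z))) (tSizeEq Zl.length))
              (T q ψ))) := rfl
    -- generic facts
    have fvq : ∀ z ∈ φ.fv, z ∈ Finset.Icc 1 q := fun z hz => E.Asub (hfv₁ hz)
    have fvX : ∀ z ∈ φ.fv, z ∈ Xf q := fun z hz => Icc_sub_Xf q (fvq z hz)
    have barfvX : ∀ z ∈ φ.fv, bar q z ∈ Xf q := fun z hz => bar_memX (fvX z hz)
    have bar_notA : ∀ z, z ∈ Finset.Icc 1 q → bar q z ∉ A := by
      intro z hz hc
      have h1 := mem_Icc'.mp (E.Asub hc)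
      have h2 := mem_Icc'.mp hz
      rw [bar_low h2.1 h2.2] at h1
      omega
    have bar_ne : ∀ z, z ∈ Finset.Icc 1 q → ∀ x ∈ A, bar q z ≠ x := by
      intro z hz x hx hc
      exact bar_notA z hz (hc ▸ hx)
    have sbinj : ∀ i ∈ Xf q, ∀ j ∈ Xf q, s' (bar q i) = s' (bar q j) → i = j :=
      fun i hi j hj hc => bar_inj hi hj (E.inj _ (bar_memX hi) _ (bar_memX hj) hc)
    have fvinj : ∀ x ∈ φ.fv, ∀ y ∈ φ.fv, s' (bar q x) = s' (bar q y) → x = y :=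
      fun x hx y hy hc => sbinj x (fvX x hx) y (fvX y hy) hc
    rw [hT]
    simp only [FSat]
    constructor
    · -- `FSat` of the wand implies `TSat` of the translation
      intro W h₁' hd1 hprem
      obtain ⟨hPa, hPb, hPc, hPd⟩ :
          TSat s' h₁' (bigAnd (Zl.map fun z => tAlloc (bar q z))) ∧
          TSat s' h₁' (bigAnd (Zc.map fun z => .not (tAlloc (bar q z)))) ∧
          TSat s' h₁' (SafeF q) ∧ TSat s' h₁' ((T q φ).rename (bar q)) :=
        ⟨hprem.1, hprem.2.1, hprem.2.2.1, hprem.2.2.2⟩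
      have hP1 : ∀ z ∈ φ.fv, s' (bar q z) ∈ h₁'.dom := by
        intro z hz
        have := (TSat_bigAnd _ _ _).mp hPa (tAlloc (bar q z))
          (List.mem_map.mpr ⟨z, (hZmem z).mpr hz, rfl⟩)
        exact (TSat_tAlloc _ _ _).mp this
      have hP2 : ∀ v ∈ Xf q, v ∉ φ.fv → s' (bar q v) ∉ h₁'.dom := by
        intro v hv hvfv
        have := (TSat_bigAnd _ _ _).mp hPb (.not (tAlloc (bar q v)))
          (List.mem_map.mpr ⟨v, (hZcmem v).mpr ⟨hv, hvfv⟩, rfl⟩)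
        intro hc
        exact this ((TSat_tAlloc _ _ _).mpr hc)
      have hP3 := (TSat_SafeF _ _ _).mp hPc
      have hP4 : TSat (fun v => s' (bar q v)) h₁' (T q φ) := (TSat_rename _ _ _ _).mp hPd
      -- split h₁' into the bar cells and the genuine heap
      set h₁c : Heap := h₁'.restrict (fun l => ∀ i ∈ Xf q, s' i ≠ l) with hh₁c
      have hc_f : ∀ l, (∀ i ∈ Xf q, s' i ≠ l) → h₁c.f l = h₁'.f l :=
        fun l hl => by rw [hh₁c, Heap.restrict_f, if_pos hl]
      have hc_X : ∀ i ∈ Xf q, h₁c.f (s' i) = none := by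
        intro i hi
        rw [hh₁c, Heap.restrict_f, if_neg]
        push_neg
        exact ⟨i, hi, rfl⟩
      have hc_sub : ∀ l w, h₁c.f l = some w → h₁'.f l = some w := by
        intro l w hl
        rw [hh₁c, Heap.restrict_f] at hl
        by_cases hq : ∀ i ∈ Xf q, s' i ≠ l
        · rwa [if_pos hq] at hl
        · rw [if_neg hq] at hl; cases hl
      set σ' : Var → Loc := fun v =>
        if v ∈ φ.fv then (h₁'.f (s' (bar q v))).getD 0 else σ v with hσ'
      have hσ'cell : ∀ z ∈ φ.fv, h₁'.f (s' (bar q z)) = some (σ' z) := by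
        intro z hz
        obtain ⟨w, hw⟩ : ∃ w, h₁'.f (s' (bar q z)) = some w := by
          cases hcc : h₁'.f (s' (bar q z))
          · exact absurd hcc (hP1 z hz)
          · exact ⟨_, rfl⟩
        rw [hw, hσ']
        simp [hz, hw]
      have E1 : Enc q (fun v => s' (bar q v)) φ.fv σ' h₁c h₁' := by
        constructor
        · exact sbinj
        · exact fun z hz => fvq z hz
        · exact hσ'cell
        · intro i hi hifv
          have := hP2 i hi hifv
          rw [Heap.mem_dom] at this
          push_neg at this
          exact this
        · intro l hl
          refine (hc_f l ?_).symm
          intro j hj hc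
          have hbj := bar_memX hj
          have := hl (bar q j) hbj
          rw [bar_bar hj] at this
          exact this hc
        · exact fun i hi => hc_X (bar q i) (bar_memX hi)
        · intro i hi l hc
          exact hP3.2 (bar q i) (bar_memX hi) l (hc_sub l _ hc)
        · intro z hz i hi hc
          have := hσ'cell z hz
          rw [hc] at this
          exact hP3.2 (bar q i) (bar_memX hi) _ this
      have FS1 : FSat σ' h₁c φ :=
        (ih₁ (fun v => s' (bar q v)) σ' φ.fv h₁c h₁' E1 (fun z hz => hz) hbndZ hnd.1).mpr hP4
      rw [TSat_tImp]
      intro hguard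
      have hG1 : TSat s' (h'.union h₁') (bigAnd (Zl.map fun z => .nEq z (bar q z))) :=
        hguard.1
      have hσσ' : ∀ z ∈ φ.fv, σ' z = σ z := by
        intro z hz
        have hnq := (TSat_bigAnd _ _ _).mp hG1 (.nEq z (bar q z))
          (List.mem_map.mpr ⟨z, (hZmem z).mpr hz, rfl⟩)
        have h3 : (h'.union h₁').f (s' z) = (h'.union h₁').f (s' (bar q z)) := hnq.2.2
        rw [Heap.union_f, Heap.union_f, E.cell z (hfv₁ hz),
          E.nocell (bar q z) (barfvX z hz) (bar_notA z (fvq z hz)), hσ'cell z hz] at h3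
        exact (Option.some.inj h3).symm
      have FS1' : FSat σ h₁c φ := (FSat_fv fun z hz => hσσ' z hz).mp FS1
      have hd_c : h₁c.Disj hp := by
        intro l
        cases hcc : h₁c.f l with
        | none => exact Or.inl rfl
        | some w =>
          right
          have hl' : h₁'.f l = some w := hc_sub l w hcc
          have hlX : ∀ i ∈ Xf q, s' i ≠ l := by
            intro i hi hc
            rw [← hc, hc_X i hi] at hcc
            cases hcc
          rcases hd1 l with hdd | hdd
          · rw [hdd] at hl'; cases hl'
          · rw [← E.rest l hlX]; exact hdd
      have FS2 : FSat σ (hp.union h₁c) ψ := W h₁c hd_c FS1'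
      -- the separating conjunction
      set barZ : Loc → Prop := fun l => ∃ z ∈ φ.fv, s' (bar q z) = l with hbarZ
      refine ⟨(h'.union h₁').restrict barZ, (h'.union h₁').restrict (fun l => ¬ barZ l),
        Heap.restrict_disj _ _, Heap.restrict_union _ _, ⟨?_, ?_⟩, ?_⟩
      · -- allocations of the bar cells
        rw [TSat_bigAnd]
        rintro g hg
        obtain ⟨z, hz, rfl⟩ := List.mem_map.mp hg
        rw [hZmem] at hz
        rw [TSat_tAlloc, Heap.mem_dom, Heap.restrict_f, if_pos ⟨z, hz, rfl⟩, Heap.union_f,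
          E.nocell (bar q z) (barfvX z hz) (bar_notA z (fvq z hz)), hσ'cell z hz]
        simp [Option.or]
      · -- size of the bar cells
        rw [TSat_tSizeEq]
        have hdom : ((h'.union h₁').restrict barZ).dom = (fun z => s' (bar q z)) '' ↑(φ.fv) := by
          ext l
          simp only [Heap.mem_dom, Heap.restrict_f, Set.mem_image, Finset.mem_coe]
          constructor
          · intro hl
            by_cases hq : barZ l
            · obtain ⟨z, hz, rfl⟩ := hq
              exact ⟨z, hz, rfl⟩
            · rw [if_neg hq] at hl; exact absurd rfl hl
          · rintro ⟨z, hz, rfl⟩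
            rw [if_pos ⟨z, hz, rfl⟩, Heap.union_f,
              E.nocell (bar q z) (barfvX z hz) (bar_notA z (fvq z hz)), hσ'cell z hz]
            simp [Option.or]
        rw [hdom, hZlen, Set.ncard_image_of_injOn, Set.ncard_coe_finset]
        intro x hx y hy hc
        exact fvinj x hx y hy hc
      · -- the remainder satisfies `T ψ`
        have hrf : ∀ l, ¬ barZ l → ((h'.union h₁').restrict (fun l => ¬ barZ l)).f l =
            (h'.f l).or (h₁'.f l) := by
          intro l hl
          rw [Heap.restrict_f, if_pos hl, Heap.union_f]
        have E2 : Enc q s' A σ (hp.union h₁c) ((h'.union h₁').restrict (fun l => ¬ barZ l)) := by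
          constructor
          · exact E.inj
          · exact E.Asub
          · intro x hx
            have hnb : ¬ barZ (s' x) := by
              rintro ⟨z, hz, hc⟩
              exact bar_ne z (fvq z hz) x hx (E.inj _ (barfvX z hz) _ (E.AsubX hx) hc)
            rw [hrf _ hnb, E.cell x hx]
            rfl
          · intro i hi hiA
            by_cases hq : barZ (s' i)
            · rw [Heap.restrict_f, if_neg (by simpa using hq)]
            · rw [hrf _ hq, E.nocell i hi hiA]
              have hbarifv : bar q i ∉ φ.fv := by
                intro hc
                apply hq
                exact ⟨bar q i, hc, by rw [bar_bar hi]⟩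
              have := hP2 (bar q i) (bar_memX hi) hbarifv
              rw [bar_bar hi, Heap.mem_dom] at this
              push_neg at this
              rw [this]
              rfl
          · intro l hl
            have hnb : ¬ barZ l := by
              rintro ⟨z, hz, rfl⟩
              exact hl (bar q z) (barfvX z hz) rfl
            rw [hrf _ hnb, E.rest l hl, ← hc_f l hl, Heap.union_f]
          · intro i hi
            rw [Heap.union_f, E.hpX i hi, hc_X i hi]
            rfl
          · intro i hi l hc
            rw [Heap.union_f] at hc
            cases hcc : hp.f l with
            | some w =>
              rw [hcc] at hc
              exact E.hpran i hi l (by rw [hcc]; exact hc)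
            | none =>
              rw [hcc] at hc
              have : h₁c.f l = some (s' i) := hc
              exact hP3.2 i hi l (hc_sub l _ this)
          · exact E.sX
        exact (ih₂ s' σ A (hp.union h₁c) _ E2 hfv₂ hbnd₂ hnd.2.1).mp FS2
    · -- `TSat` of the translation implies `FSat` of the wand
      intro W h₁ hd hsat1
      -- clean `h₁` by a permutation moving it off the store cells
      have hSF : ∀ l ∈ (Xf q).image s',
          l ∉ hp.fin.toFinset ∪ hp.ran_fin.toFinset ∪ A.image σ := by
        intro l hl
        obtain ⟨i, hi, rfl⟩ := Finset.mem_image.mp hl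
        simp only [Finset.mem_union, Finset.mem_image, Set.Finite.mem_toFinset, not_or,
          not_exists]
        refine ⟨⟨?_, ?_⟩, ?_⟩
        · intro hc
          exact hc (E.hpX i hi)
        · rintro ⟨m, hm⟩
          exact E.hpran i hi m hm
        · rintro y ⟨hy, hc⟩
          exact E.sX y hy i hi hc
      obtain ⟨π, hπF, hπD⟩ := exists_clean_perm ((Xf q).image s')
        (hp.fin.toFinset ∪ hp.ran_fin.toFinset ∪ A.image σ)
        (h₁.fin.toFinset ∪ h₁.ran_fin.toFinset) hSF
      set h₁c : Heap := h₁.perm π with hh₁c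
      have hdomc : ∀ l, h₁c.f l ≠ none → ∀ i ∈ Xf q, s' i ≠ l := by
        intro l hl i hi hc
        have : l ∈ h₁c.dom := hl
        rw [hh₁c, Heap.dom_perm] at this
        obtain ⟨m, hm, rfl⟩ := this
        exact hπD m (Finset.mem_union_left _ (Set.Finite.mem_toFinset _ |>.mpr hm))
          (Finset.mem_image.mpr ⟨i, hi, hc⟩)
      have hranc : ∀ l w, h₁c.f l = some w → ∀ i ∈ Xf q, w ≠ s' i := by
        intro l w hl i hi hc
        have : w ∈ h₁c.ran := ⟨l, hl⟩
        rw [hh₁c, Heap.ran_perm] at this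
        obtain ⟨m, hm, rfl⟩ := this
        exact hπD m (Finset.mem_union_right _ (Set.Finite.mem_toFinset _ |>.mpr hm))
          (Finset.mem_image.mpr ⟨i, hi, hc.symm⟩)
      have hπfixF : ∀ l, l ∈ hp.dom ∪ hp.ran ∨ l ∈ σ '' ↑A → π l = l := by
        intro l hl
        apply hπF
        simp only [Finset.mem_union, Set.Finite.mem_toFinset, Finset.mem_image]
        rcases hl with (hl | hl) | hl
        · exact Or.inl (Or.inl hl)
        · exact Or.inl (Or.inr hl)
        · obtain ⟨y, hy, rfl⟩ := hl
          exact Or.inr ⟨y, hy, rfl⟩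
      have hdc_hp : h₁c.Disj hp := by
        intro l
        cases hcc : h₁c.f l with
        | none => exact Or.inl rfl
        | some w =>
          right
          have : l ∈ h₁c.dom := by rw [Heap.mem_dom, hcc]; simp
          rw [hh₁c, Heap.dom_perm] at this
          obtain ⟨m, hm, rfl⟩ := this
          by_contra hcp
          have hpm : π m ∈ hp.dom := hcp
          have := perm_fix_closed (F := ↑(hp.fin.toFinset ∪ hp.ran_fin.toFinset ∪ A.image σ))
            (fun l hl => hπF l hl) (l := m) (by
              simp only [Finset.coe_union, Set.mem_union, Set.Finite.coe_toFinset]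
              exact Or.inl (Or.inl hpm))
          rw [this] at hpm
          rcases hd m with hm' | hm'
          · exact hm hm'
          · exact (Heap.mem_dom.mp hpm) hm'
      have hπσ : ∀ y ∈ A, π (σ y) = σ y :=
        fun y hy => hπfixF (σ y) (Or.inr ⟨y, hy, rfl⟩)
      have hph : hp.perm π = hp :=
        Heap.perm_fixed fun l hl => hπfixF l (Or.inl hl)
      have hsat1c : FSat σ h₁c φ := by
        have h0 : FSat (π ∘ σ) h₁c φ := (FSat_perm π).mpr hsat1
        exact (FSat_fv fun y hy => by
          simp only [Function.comp]
          exact hπσ y (hfv₁ hy)).mp h0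
      set C : Heap := cells φ.fv (fun z => s' (bar q z)) σ with hC
      have hCmem : ∀ z ∈ φ.fv, C.f (s' (bar q z)) = some (σ z) :=
        fun z hz => cells_f_mem fvinj hz
      have hCnone : ∀ l, (∀ z ∈ φ.fv, s' (bar q z) ≠ l) → C.f l = none :=
        fun l hl => cells_f_none hl
      have hCd : C.Disj h₁c := by
        intro l
        by_cases hq : ∃ z ∈ φ.fv, s' (bar q z) = l
        · right
          obtain ⟨z, hz, rfl⟩ := hq
          cases hcc : h₁c.f (s' (bar q z)) with
          | none => rfl
          | some w =>
            exact absurd rfl (hdomc _ (by rw [hcc]; simp) _ (barfvX z hz))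
        · left
          push_neg at hq
          exact hCnone l hq
      set H₁ : Heap := C.union h₁c with hH₁
      have hH₁f : ∀ l, H₁.f l = (C.f l).or (h₁c.f l) := fun l => rfl
      have hH₁d : H₁.Disj h' := by
        intro l
        cases hcc : H₁.f l with
        | none => exact Or.inl rfl
        | some w =>
          right
          rw [hH₁f] at hcc
          cases hcC : C.f l with
          | some u =>
            rw [hcC] at hcc
            obtain ⟨z, hz, hl⟩ : ∃ z ∈ φ.fv, s' (bar q z) = l := by
              by_contra hq
              push_neg at hq
              rw [hCnone l hq] at hcC
              cases hcC
            rw [← hl]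
            exact E.nocell (bar q z) (barfvX z hz) (bar_notA z (fvq z hz))
          | none =>
            rw [hcC] at hcc
            have h1c : h₁c.f l = some w := hcc
            have hlX : ∀ i ∈ Xf q, s' i ≠ l := hdomc l (by rw [h1c]; simp)
            rw [E.rest l hlX]
            rcases hdc_hp l with hm | hm
            · rw [hm] at h1c; cases h1c
            · exact hm
      have hH₁X : ∀ z ∈ φ.fv, H₁.f (s' (bar q z)) = some (σ z) := by
        intro z hz
        rw [hH₁f, hCmem z hz]
        rfl
      have hH₁ranC : ∀ l w, H₁.f l = some w → ∀ i ∈ Xf q, w ≠ s' i := by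
        intro l w hl
        rw [hH₁f] at hl
        cases hcC : C.f l with
        | some u =>
          rw [hcC] at hl
          have huw : u = w := Option.some.inj hl
          obtain ⟨z, hz, hzl⟩ : ∃ z ∈ φ.fv, s' (bar q z) = l := by
            by_contra hq
            push_neg at hq
            rw [hCnone l hq] at hcC
            cases hcC
          rw [← hzl, hCmem z hz] at hcC
          have : w = σ z := by rw [← huw, ← Option.some.inj hcC]
          rw [this]
          intro i hi
          exact E.sX z (hfv₁ hz) i hi
        | none =>
          rw [hcC] at hl
          exact hranc l w hl
      -- the premise of the translated wand holds on `H₁`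
      have hprem : TSat s' H₁
          (.and (bigAnd (Zl.map fun z => tAlloc (bar q z)))
            (.and (bigAnd (Zc.map fun z => .not (tAlloc (bar q z))))
              (.and (SafeF q) ((T q φ).rename (bar q))))) := by
        refine ⟨?_, ?_, ?_, ?_⟩
        · rw [TSat_bigAnd]
          rintro g hg
          obtain ⟨z, hz, rfl⟩ := List.mem_map.mp hg
          rw [hZmem] at hz
          rw [TSat_tAlloc, Heap.mem_dom, hH₁X z hz]
          simp
        · rw [TSat_bigAnd]
          rintro g hg
          obtain ⟨v, hv, rfl⟩ := List.mem_map.mp hg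
          rw [hZcmem] at hv
          intro hc
          have hc' := (TSat_tAlloc _ _ _).mp hc
          rw [Heap.mem_dom, hH₁f] at hc'
          have hCn : C.f (s' (bar q v)) = none := by
            apply hCnone
            intro z hz hcz
            exact hv.2 (sbinj z (fvX z hz) v hv.1 hcz ▸ hz)
          rw [hCn] at hc'
          have hcn : h₁c.f (s' (bar q v)) = none := by
            cases hcc : h₁c.f (s' (bar q v)) with
            | none => rfl
            | some w =>
              exact absurd rfl (hdomc _ (by rw [hcc]; simp) _ (bar_memX hv.1))
          rw [hcn] at hc'
          exact hc' rfl
        · rw [TSat_SafeF]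
          exact ⟨fun i hi j hj hij hc => hij (E.inj i hi j hj hc),
            fun i hi l hc => hH₁ranC l (s' i) hc i hi rfl⟩
        · rw [TSat_rename]
          have E3 : Enc q (fun v => s' (bar q v)) φ.fv σ h₁c H₁ := by
            constructor
            · exact fun i hi j hj hc => sbinj i hi j hj hc
            · exact fun z hz => fvq z hz
            · exact fun z hz => hH₁X z hz
            · intro i hi hifv
              show H₁.f (s' (bar q i)) = none
              rw [hH₁f]
              have hCn : C.f (s' (bar q i)) = none := by
                apply hCnone
                intro z hz hcz
                exact hifv (sbinj z (fvX z hz) i hi hcz ▸ hz)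
              rw [hCn]
              cases hcc : h₁c.f (s' (bar q i)) with
              | none => rfl
              | some w =>
                exact absurd rfl (hdomc _ (by rw [hcc]; simp) _ (bar_memX hi))
            · intro l hl
              have hl' : ∀ j ∈ Xf q, s' j ≠ l := by
                intro j hj hc
                have h0 := hl (bar q j) (bar_memX hj)
                simp only [bar_bar hj] at h0
                exact h0 hc
              rw [hH₁f, hCnone l (fun z hz => hl' (bar q z) (barfvX z hz))]
              rfl
            · intro i hi
              show h₁c.f (s' (bar q i)) = none
              cases hcc : h₁c.f (s' (bar q i)) with
              | none => rfl
              | some w =>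
                exact absurd rfl (hdomc _ (by rw [hcc]; simp) _ (bar_memX hi))
            · intro i hi l hc
              exact hranc l _ hc (bar q i) (bar_memX hi) rfl
            · intro z hz i hi
              exact E.sX z (hfv₁ hz) (bar q i) (bar_memX hi)
          exact (ih₁ (fun v => s' (bar q v)) σ φ.fv h₁c H₁ E3 (fun z hz => hz)
            (fun x hx => ⟨(hbndZ x hx).1, (hbndZ x hx).2⟩) hnd.1).mp hsat1c
      have hcon := W H₁ hH₁d hprem
      rw [TSat_tImp] at hcon
      have hHf : ∀ l, (h'.union H₁).f l = (h'.f l).or ((C.f l).or (h₁c.f l)) := fun l => rfl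
      have hguard : TSat s' (h'.union H₁)
          (.and (bigAnd (Zl.map fun z => .nEq z (bar q z))) (SafeF q)) := by
        have hranH : ∀ i ∈ Xf q, ∀ l, (h'.union H₁).f l ≠ some (s' i) := by
          intro i hi l hc
          rw [Heap.union_f] at hc
          cases hcc : h'.f l with
          | some w =>
            rw [hcc] at hc
            exact E.ranClean i hi l (by rw [hcc]; exact hc)
          | none =>
            rw [hcc] at hc
            exact hH₁ranC l (s' i) hc i hi rfl
        refine ⟨?_, ?_⟩
        · rw [TSat_bigAnd]
          rintro g hg
          obtain ⟨z, hz, rfl⟩ := List.mem_map.mp hg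
          rw [hZmem] at hz
          have h1 : (h'.union H₁).f (s' z) = some (σ z) := by
            rw [Heap.union_f, E.cell z (hfv₁ hz)]
            rfl
          have h2 : (h'.union H₁).f (s' (bar q z)) = some (σ z) := by
            rw [Heap.union_f, E.nocell (bar q z) (barfvX z hz) (bar_notA z (fvq z hz)),
              hH₁X z hz]
            rfl
          exact ⟨by rw [Heap.mem_dom, h1]; simp, by rw [Heap.mem_dom, h2]; simp,
            by rw [h1, h2]⟩
        · rw [TSat_SafeF]
          exact ⟨fun i hi j hj hij hc => hij (E.inj i hi j hj hc), hranH⟩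
      obtain ⟨Ha, Hb, hab, habU, hHa, hHb⟩ := hcon hguard
      have hHa1 : ∀ z ∈ φ.fv, s' (bar q z) ∈ Ha.dom := by
        intro z hz
        have := (TSat_bigAnd _ _ _).mp hHa.1 (tAlloc (bar q z))
          (List.mem_map.mpr ⟨z, (hZmem z).mpr hz, rfl⟩)
        exact (TSat_tAlloc _ _ _).mp this
      have hHa2 : Ha.dom.ncard = Zl.length := (TSat_tSizeEq _ _ _).mp hHa.2
      have hdomHa : Ha.dom = (fun z => s' (bar q z)) '' ↑(φ.fv) := by
        symm
        apply Set.eq_of_subset_of_ncard_le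
        · rintro l ⟨z, hz, rfl⟩
          exact hHa1 z hz
        · rw [hHa2, hZlen,
            Set.ncard_image_of_injOn (s := (↑(φ.fv) : Set Var))
              (fun x hx y hy hc => fvinj x hx y hy hc),
            Set.ncard_coe_finset]
        · exact Ha.fin
      have hHbf : ∀ l, l ∉ Ha.dom → Hb.f l = (h'.union H₁).f l := by
        intro l hl
        rw [← habU, Heap.union_f]
        rw [Heap.mem_dom] at hl
        push_neg at hl
        rw [hl]
        rfl
      have hHbn : ∀ l, l ∈ Ha.dom → Hb.f l = none := by
        intro l hl
        rcases hab l with hm | hm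
        · exact absurd hm (Heap.mem_dom.mp hl)
        · exact hm
      have E4 : Enc q s' A σ (hp.union h₁c) Hb := by
        constructor
        · exact E.inj
        · exact E.Asub
        · intro x hx
          have hnd' : s' x ∉ Ha.dom := by
            rw [hdomHa]
            rintro ⟨z, hz, hc⟩
            exact bar_ne z (fvq z hz) x hx (E.inj _ (barfvX z hz) _ (E.AsubX hx) hc)
          rw [hHbf _ hnd', Heap.union_f, E.cell x hx]
          rfl
        · intro i hi hiA
          by_cases hq : s' i ∈ Ha.dom
          · exact hHbn _ hq
          · rw [hHbf _ hq, hHf, E.nocell i hi hiA]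
            have hCn : C.f (s' i) = none := by
              apply hCnone
              intro z hz hcz
              apply hq
              rw [hdomHa]
              exact ⟨z, hz, hcz⟩
            rw [hCn]
            cases hcc : h₁c.f (s' i) with
            | none => rfl
            | some w =>
              exact absurd rfl (hdomc _ (by rw [hcc]; simp) _ hi)
        · intro l hl
          have hnd' : l ∉ Ha.dom := by
            rw [hdomHa]
            rintro ⟨z, hz, hc⟩
            exact hl (bar q z) (barfvX z hz) hc
          rw [hHbf _ hnd', hHf, E.rest l hl,
            hCnone l (fun z hz => hl (bar q z) (barfvX z hz)), Heap.union_f]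
          cases hp.f l <;> rfl
        · intro i hi
          rw [Heap.union_f, E.hpX i hi]
          cases hcc : h₁c.f (s' i) with
          | none => rfl
          | some w =>
            exact absurd rfl (hdomc _ (by rw [hcc]; simp) _ hi)
        · intro i hi l hc
          rw [Heap.union_f] at hc
          cases hcc : hp.f l with
          | some w =>
            rw [hcc] at hc
            exact E.hpran i hi l (by rw [hcc]; exact hc)
          | none =>
            rw [hcc] at hc
            exact hranc l _ hc i hi rfl
        · exact E.sX
      have FSψ : FSat σ (hp.union h₁c) ψ :=
        (ih₂ s' σ A (hp.union h₁c) Hb E4 hfv₂ hbnd₂ hnd.2.1).mpr hHb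
      have hkey : hp.union h₁c = (hp.union h₁).perm π := by
        rw [Heap.perm_union, hph, hh₁c]
      rw [hkey] at FSψ
      have FSψ' : FSat (π ∘ σ) ((hp.union h₁).perm π) ψ :=
        (FSat_fv fun y hy => by
          simp only [Function.comp]
          exact (hπσ y (hfv₂ hy)).symm).mp FSψ
      exact (FSat_perm π).mp FSψ'

/-- A closed `FOSL(−∗)` formula `φ` with quantified variables among
`{x₁,…,x_q}` (distinct quantifications using distinct variables) is valid
iff `T_VAL(φ)` is valid. -/
theorem equivalid (q : ℕ) (φ : FForm)
    (hclosed : φ.fv = ∅)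
    (hbv : ∀ x ∈ φ.binderList, x ∈ Finset.Icc 1 q)
    (hnodup : φ.binderList.Nodup) :
    (∀ (s : Var → Loc) (h : Heap), FSat s h φ) ↔
      (∀ (s : Var → Loc) (h : Heap), TSat s h (TVAL q φ)) := by
  have hfv : φ.fv ⊆ (∅ : Finset Var) := by rw [hclosed]
  constructor
  · -- validity of `φ` implies validity of `T_VAL(φ)`
    intro hvalid s h
    rw [TVAL, TSat_tImp]
    intro hyp
    have h1 : ∀ i ∈ Xf q, s i ∉ h.dom := by
      intro i hi
      have := (TSat_bigAnd _ _ _).mp hyp.1 (.not (tAlloc i))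
        (List.mem_map.mpr ⟨i, mem_varsX.mpr (Finset.mem_Icc.mp hi), rfl⟩)
      intro hc
      exact this ((TSat_tAlloc _ _ _).mpr hc)
    have h2 := (TSat_SafeF _ _ _).mp hyp.2
    have hnone : ∀ i ∈ Xf q, h.f (s i) = none := by
      intro i hi
      have := h1 i hi
      rw [Heap.mem_dom] at this
      push_neg at this
      exact this
    have E : Enc q s ∅ s h h := by
      constructor
      · intro i hi j hj hc
        by_contra hij
        exact h2.1 i hi j hj hij hc
      · exact Finset.empty_subset _
      · intro x hx; cases hx
      · intro i hi _; exact hnone i hi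
      · intro l _; rfl
      · exact hnone
      · exact h2.2
      · intro x hx; cases hx
    exact (TCorrect q φ s s ∅ h h E hfv
      (fun x hx => ⟨hbv x hx, Finset.notMem_empty x⟩) hnodup).mp (hvalid s h)
  · -- validity of `T_VAL(φ)` implies validity of `φ`
    intro hvalid s h
    obtain ⟨s', hinj, hdomf, hranf⟩ :
        ∃ s' : Var → Loc, (∀ i j, s' i = s' j → i = j) ∧ (∀ i, h.f (s' i) = none) ∧
          (∀ i l, h.f l ≠ some (s' i)) := by
      refine ⟨fun i => (h.fin.toFinset ∪ h.ran_fin.toFinset).sup id + 1 + i, ?_, ?_, ?_⟩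
      · intro i j hc
        exact Nat.add_left_cancel hc
      · intro i
        by_contra hc
        have hmem : (h.fin.toFinset ∪ h.ran_fin.toFinset).sup id + 1 + i ∈
            h.fin.toFinset ∪ h.ran_fin.toFinset :=
          Finset.mem_union_left _ (Set.Finite.mem_toFinset _ |>.mpr hc)
        have h2 : (h.fin.toFinset ∪ h.ran_fin.toFinset).sup id + 1 + i ≤
            (h.fin.toFinset ∪ h.ran_fin.toFinset).sup id := Finset.le_sup (f := id) hmem
        exact Nat.not_succ_le_self _ (le_trans (Nat.le_add_right _ i) h2)
      · intro i l hc
        have hmem : (h.fin.toFinset ∪ h.ran_fin.toFinset).sup id + 1 + i ∈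
            h.fin.toFinset ∪ h.ran_fin.toFinset :=
          Finset.mem_union_right _ (Set.Finite.mem_toFinset _ |>.mpr ⟨l, hc⟩)
        have h2 : (h.fin.toFinset ∪ h.ran_fin.toFinset).sup id + 1 + i ≤
            (h.fin.toFinset ∪ h.ran_fin.toFinset).sup id := Finset.le_sup (f := id) hmem
        exact Nat.not_succ_le_self _ (le_trans (Nat.le_add_right _ i) h2)
    have E : Enc q s' ∅ s h h := by
      constructor
      · exact fun i _ j _ hc => hinj i j hc
      · exact Finset.empty_subset _
      · intro x hx; cases hx
      · intro i _ _; exact hdomf i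
      · intro l _; rfl
      · intro i _; exact hdomf i
      · intro i _ l; exact hranf i l
      · intro x hx; cases hx
    have hT := hvalid s' h
    rw [TVAL, TSat_tImp] at hT
    have hguard : TSat s' h
        (.and (bigAnd ((varsX q).map fun i => .not (tAlloc i))) (SafeF q)) := by
      refine ⟨?_, ?_⟩
      · rw [TSat_bigAnd]
        rintro g hg
        obtain ⟨i, hi, rfl⟩ := List.mem_map.mp hg
        intro hc
        have := (TSat_tAlloc _ _ _).mp hc
        rw [Heap.mem_dom, hdomf i] at this
        exact this rfl
      · rw [TSat_SafeF]
        exact ⟨fun i _ j _ hij hc => hij (hinj i j hc), fun i _ l => hranf i l⟩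
    exact (TCorrect q φ s' s ∅ h h E hfv
      (fun x hx => ⟨hbv x hx, Finset.notMem_empty x⟩) hnodup).mpr (hT hguard)

end SL10
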